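/- arXiv:1405.0681 — 6 statements merged into one kernel-verified Lean document; each statement's English description precedes it below -/
import Mathlib

section
/- For all real numbers a ≥ 0, ε > 0, and p ≥ 1, the inequality (1 + a·ε)^p + (a + ε)^p ≤ (1 + ε)^p · (1 + a^p) holds. -/
theorem stmt_0 (a ε p : ℝ) (ha : 0 ≤ a) (hε : 0 < ε) (hp : 1 ≤ p) :
    (1 + a * ε) ^ p + (a + ε) ^ p ≤ (1 + ε) ^ p * (1 + a ^ p) := by
  have h1 : (0:ℝ) < 1 + ε := by linarith
  set s : ℝ := ε / (1 + ε) with hs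
  have hs0 : 0 ≤ s := by positivity
  have hs1 : s ≤ 1 := by rw [hs, div_le_one h1]; linarith
  have hconv := convexOn_rpow hp
  have hu : (1 + a*ε) = (1+ε) * ((1-s)*1 + s*a) := by rw [hs]; field_simp; ring
  have hv : (a + ε) = (1+ε) * (s*1 + (1-s)*a) := by rw [hs]; field_simp; ring
  have h1m : (1:ℝ) ∈ Set.Ici (0:ℝ) := by norm_num
  have ham : a ∈ Set.Ici (0:ℝ) := ha
  have hupow : ((1-s)*1 + s*a)^p ≤ (1-s)*1^p + s*a^p := by
    have := hconv.2 h1m ham (by linarith : (0:ℝ) ≤ 1 - s) hs0 (by ring)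
    simpa [smul_eq_mul] using this
  have hvpow : (s*1 + (1-s)*a)^p ≤ s*1^p + (1-s)*a^p := by
    have := hconv.2 h1m ham hs0 (by linarith : (0:ℝ) ≤ 1 - s) (by ring)
    simpa [smul_eq_mul] using this
  have hu0 : 0 ≤ (1-s)*1 + s*a := by nlinarith
  have hv0 : 0 ≤ s*1 + (1-s)*a := by nlinarith
  rw [hu, hv, Real.mul_rpow h1.le hu0, Real.mul_rpow h1.le hv0]
  have hpos : 0 ≤ (1+ε)^p := Real.rpow_nonneg h1.le p
  have : ((1-s)*1 + s*a)^p + (s*1 + (1-s)*a)^p ≤ 1 + a^p := by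
    rw [Real.one_rpow] at hupow hvpow
    linarith
  nlinarith [this, hpos, Real.rpow_nonneg hu0 p, Real.rpow_nonneg hv0 p]
end

section
/- Let 0 < ε < 1, p ≥ 1, and set c = (1 - ε^p/2^p)^(1/p). Then for all a in the interval [ε/(2c), 2c/ε], the inequality (1-ε)^p · (1 + a^p) ≤ (a·c - ε/2)^p + (c - a·ε/2)^p holds. -/
theorem stmt_1 (ε p : ℝ) (hε0 : 0 < ε) (hε1 : ε < 1) (hp : 1 ≤ p)
    (c : ℝ) (hc : c = (1 - ε ^ p / 2 ^ p) ^ (1 / p))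
    (a : ℝ) (ha : a ∈ Set.Icc (ε / (2 * c)) (2 * c / ε)) :
    (1 - ε) ^ p * (1 + a ^ p) ≤ (a * c - ε / 2) ^ p + (c - a * ε / 2) ^ p := by
  have hp0 : 0 < p := lt_of_lt_of_le one_pos hp
  have ht0 : (0:ℝ) < ε / 2 := by linarith
  have ht1 : ε / 2 < 1 := by linarith
  have hdiv : ε ^ p / 2 ^ p = (ε / 2) ^ p := (Real.div_rpow hε0.le (by norm_num : (0:ℝ) ≤ 2) p).symm
  have hbase : (0:ℝ) < 1 - (ε / 2) ^ p := by
    have := Real.rpow_lt_one ht0.le ht1 hp0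
    linarith
  have hc' : c = (1 - (ε / 2) ^ p) ^ (1 / p) := by rw [hc, hdiv]
  have hcpos : 0 < c := by rw [hc']; exact Real.rpow_pos_of_pos hbase _
  have hcp : c ^ p = 1 - (ε / 2) ^ p := by
    rw [hc', one_div, Real.rpow_inv_rpow hbase.le hp0.ne']
  -- c ≥ 1 - ε/2
  have hc_ge : 1 - ε / 2 ≤ c := by
    by_contra h
    push_neg at h
    have h1 : c ^ p < (1 - ε / 2) ^ p :=
      Real.rpow_lt_rpow hcpos.le h hp0
    have h2 : (1 - ε / 2) ^ p ≤ 1 - ε / 2 := by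
      calc (1 - ε / 2) ^ p ≤ (1 - ε / 2) ^ (1:ℝ) :=
            Real.rpow_le_rpow_of_exponent_ge (by linarith) (by linarith) hp
        _ = 1 - ε / 2 := Real.rpow_one _
    have h3 : (ε / 2) ^ p ≤ ε / 2 := by
      calc (ε / 2) ^ p ≤ (ε / 2) ^ (1:ℝ) :=
            Real.rpow_le_rpow_of_exponent_ge ht0 ht1.le hp
        _ = ε / 2 := Real.rpow_one _
    rw [hcp] at h1
    linarith
  obtain ⟨ha1, ha2⟩ := ha
  have ha0 : 0 ≤ a := le_trans (by positivity) ha1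
  have hX : 0 ≤ a * c - ε / 2 := by
    have := (div_le_iff₀ (by positivity : (0:ℝ) < 2 * c)).mp ha1
    nlinarith
  have hY : 0 ≤ c - a * ε / 2 := by
    have h' := (le_div_iff₀ hε0).mp ha2
    linarith
  set N : ℝ := (1 + a ^ p) ^ (1 / p) with hN
  have hNpos : 0 < N := Real.rpow_pos_of_pos (by positivity) _
  have hNp : N ^ p = 1 + a ^ p := by
    rw [hN, one_div, Real.rpow_inv_rpow (by positivity) hp0.ne']
  -- Minkowski with f = (ac-ε/2, c-aε/2), g = (ε/2, aε/2)
  have hmink := Real.Lp_add_le_of_nonneg (s := (Finset.univ : Finset (Fin 2)))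
      (f := ![a * c - ε / 2, c - a * ε / 2]) (g := ![ε / 2, a * ε / 2]) hp
      (by intro i _
          fin_cases i
          · simpa using hX
          · simpa using hY)
      (by intro i _
          fin_cases i
          · simpa using ht0.le
          · show (0:ℝ) ≤ ![ε / 2, a * ε / 2] 1
            simp only [Matrix.cons_val_one, Matrix.head_cons]
            exact div_nonneg (mul_nonneg ha0 hε0.le) (by norm_num))
  simp only [Fin.sum_univ_two, Matrix.cons_val_zero, Matrix.cons_val_one, Matrix.head_cons] at hmink
  have hsum1 : (a * c - ε / 2 + ε / 2) ^ p + (c - a * ε / 2 + a * ε / 2) ^ p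
      = c ^ p * (1 + a ^ p) := by
    have : a * c - ε / 2 + ε / 2 = a * c := by ring
    rw [this]
    have : c - a * ε / 2 + a * ε / 2 = c := by ring
    rw [this, Real.mul_rpow ha0 hcpos.le]
    ring
  have hsum2 : (ε / 2) ^ p + (a * ε / 2) ^ p = (ε / 2) ^ p * (1 + a ^ p) := by
    have : a * ε / 2 = a * (ε / 2) := by ring
    rw [this, Real.mul_rpow ha0 ht0.le]
    ring
  rw [hsum1, hsum2] at hmink
  have e1 : (c ^ p * (1 + a ^ p)) ^ (1 / p) = c * N := by
    rw [Real.mul_rpow (by positivity) (by positivity), hN, one_div,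
      Real.rpow_rpow_inv hcpos.le hp0.ne']
  have e2 : ((ε / 2) ^ p * (1 + a ^ p)) ^ (1 / p) = (ε / 2) * N := by
    rw [Real.mul_rpow (by positivity) (by positivity), hN, one_div,
      Real.rpow_rpow_inv ht0.le hp0.ne']
  rw [e1, e2] at hmink
  set M : ℝ := ((a * c - ε / 2) ^ p + (c - a * ε / 2) ^ p) ^ (1 / p) with hM
  have hkey : (1 - ε) * N ≤ M := by nlinarith [hNpos]
  have h1ε : 0 ≤ (1 - ε) * N := mul_nonneg (by linarith) hNpos.le
  have hM_pow : M ^ p = (a * c - ε / 2) ^ p + (c - a * ε / 2) ^ p := by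
    rw [hM, one_div, Real.rpow_inv_rpow (by positivity) hp0.ne']
  have hfin : ((1 - ε) * N) ^ p ≤ M ^ p :=
    Real.rpow_le_rpow h1ε hkey hp0.le
  rw [Real.mul_rpow (by linarith) hNpos.le, hNp, hM_pow] at hfin
  exact hfin
end

section
/- Let 0 < ε < 1, p ≥ 1, and set c = (1 - ε^p/2^p)^(1/p). Then for all a ≥ 0 with a ≤ ε/(2c) or a ≥ 2c/ε, the inequality (1-ε)^p · (1 + a^p) ≤ |1 - a|^p holds. -/
private lemma aux_add_rpow {x y p : ℝ} (hx : 0 ≤ x) (hy : 0 ≤ y) (hp : 1 ≤ p) :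
    x ^ p + y ^ p ≤ (x + y) ^ p := by
  have h := NNReal.add_rpow_le_rpow_add x.toNNReal y.toNNReal hp
  rw [← Real.toNNReal_add hx hy] at h
  have h2 := NNReal.coe_le_coe.2 h
  rwa [NNReal.coe_add, NNReal.coe_rpow, NNReal.coe_rpow, NNReal.coe_rpow,
    Real.coe_toNNReal _ hx, Real.coe_toNNReal _ hy,
    Real.coe_toNNReal _ (by linarith : (0:ℝ) ≤ x + y)] at h2

theorem stmt_2 (ε p : ℝ) (hε0 : 0 < ε) (hε1 : ε < 1) (hp : 1 ≤ p)
    (c : ℝ) (hc : c = (1 - ε ^ p / 2 ^ p) ^ (1 / p))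
    (a : ℝ) (ha0 : 0 ≤ a) (ha : a ≤ ε / (2 * c) ∨ 2 * c / ε ≤ a) :
    (1 - ε) ^ p * (1 + a ^ p) ≤ |1 - a| ^ p := by
  have hp0 : 0 < p := lt_of_lt_of_le one_pos hp
  have hε' : (0:ℝ) ≤ 1 - ε := by linarith
  have hap : (0:ℝ) ≤ a ^ p := Real.rpow_nonneg ha0 p
  have h1ap : (0:ℝ) ≤ 1 + a ^ p := by linarith
  have h1a : (0:ℝ) ≤ 1 + a := by linarith
  -- 1 + a^p ≤ (1+a)^p
  have hsum : 1 + a ^ p ≤ (1 + a) ^ p := by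
    have := aux_add_rpow (x := 1) (y := a) (by norm_num) ha0 hp
    simpa using this
  -- s := (1+a^p)^(1/p) ≤ 1 + a
  have hs_le : (1 + a ^ p) ^ (1 / p) ≤ 1 + a := by
    have h := Real.rpow_le_rpow h1ap hsum (by positivity : (0:ℝ) ≤ 1 / p)
    rwa [← Real.rpow_mul h1a, mul_one_div, div_self hp0.ne', Real.rpow_one] at h
  have hs0 : (0:ℝ) ≤ (1 + a ^ p) ^ (1 / p) := Real.rpow_nonneg h1ap _
  -- c ≥ 1 - ε/2
  have hεp : ε ^ p / 2 ^ p = (ε / 2) ^ p :=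
    (Real.div_rpow hε0.le (by norm_num : (0:ℝ) ≤ 2) p).symm
  have hclb : 1 - ε / 2 ≤ c := by
    rw [hc, hεp]
    have h12 : (0:ℝ) ≤ 1 - ε / 2 := by linarith
    have hsum2 : (1 - ε / 2) ^ p ≤ 1 - (ε / 2) ^ p := by
      have := aux_add_rpow (x := 1 - ε / 2) (y := ε / 2) h12 (by linarith) hp
      have h1 : (1 - ε / 2 + ε / 2 : ℝ) = 1 := by ring
      rw [h1, Real.one_rpow] at this
      linarith
    have h := Real.rpow_le_rpow (Real.rpow_nonneg h12 p) hsum2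
      (by positivity : (0:ℝ) ≤ 1 / p)
    rwa [← Real.rpow_mul h12, mul_one_div, div_self hp0.ne', Real.rpow_one] at h
  have hc0 : 0 < c := lt_of_lt_of_le (by linarith) hclb
  -- Key: (1-ε) * (1+a^p)^(1/p) ≤ |1-a|
  have key : (1 - ε) * (1 + a ^ p) ^ (1 / p) ≤ |1 - a| := by
    rcases ha with h | h
    · -- small a
      have ha1 : a * (2 - ε) ≤ ε := by
        have h2 : ε / (2 * c) ≤ ε / (2 - ε) := by
          gcongr
          · linarith
          · linarith
        have h3 := h.trans h2
        rw [le_div_iff₀ (by linarith : (0:ℝ) < 2 - ε)] at h3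
        exact h3
      have halt1 : a < 1 := by nlinarith
      rw [abs_of_nonneg (by linarith)]
      calc (1 - ε) * (1 + a ^ p) ^ (1 / p) ≤ (1 - ε) * (1 + a) :=
            mul_le_mul_of_nonneg_left hs_le hε'
        _ ≤ 1 - a := by nlinarith
    · -- large a
      have ha1 : 2 - ε ≤ ε * a := by
        have h2 : (2 - ε) / ε ≤ 2 * c / ε := by gcongr; linarith
        have h3 := h2.trans h
        rw [div_le_iff₀ hε0] at h3
        linarith
      have hagt1 : 1 ≤ a := by nlinarith
      rw [abs_of_nonpos (by linarith)]
      calc (1 - ε) * (1 + a ^ p) ^ (1 / p) ≤ (1 - ε) * (1 + a) :=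
            mul_le_mul_of_nonneg_left hs_le hε'
        _ ≤ -(1 - a) := by nlinarith
  -- raise both sides to power p
  have h := Real.rpow_le_rpow (by positivity) key hp0.le
  rwa [Real.mul_rpow hε' hs0, ← Real.rpow_mul h1ap, one_div_mul_cancel hp0.ne',
    Real.rpow_one] at h
end

section
/- Let φ be an increasing concave function on [0,1] with φ(0)=0 and lower dilation index γ_φ > 0. Then there exists a constant C > 0 such that φ(t) ≤ ∫₀ᵗ φ(s)/s ds ≤ C·φ(t) for all 0 < t ≤ 1. -/
open MeasureTheory intervalIntegral

/-- If `φ` is increasing and concave on `[0,1]` with `φ(0)=0` and lower dilation index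
`γ_φ > 0` (expressed concretely via `φ(st) ≤ C₁ t^η φ(s)`), then
`φ(t) ≤ ∫₀ᵗ φ(s)/s ds ≤ C φ(t)` for `0 < t ≤ 1`. -/
theorem stmt_6 (φ : ℝ → ℝ)
    (hφ0 : φ 0 = 0)
    (hφpos : ∀ t, 0 < t → t ≤ 1 → 0 < φ t)
    (hφmono : MonotoneOn φ (Set.Icc (0:ℝ) 1))
    (hφconc : ConcaveOn ℝ (Set.Icc (0:ℝ) 1) φ)
    (C₁ η : ℝ) (hC₁ : 0 < C₁) (hη : 0 < η)
    (hindex : ∀ s t : ℝ, 0 < s → s ≤ 1 → 0 < t → t ≤ 1 →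
      φ (s * t) ≤ C₁ * t ^ η * φ s) :
    ∃ C : ℝ, 0 < C ∧ ∀ t : ℝ, 0 < t → t ≤ 1 →
      φ t ≤ (∫ s in (0:ℝ)..t, φ s / s) ∧ (∫ s in (0:ℝ)..t, φ s / s) ≤ C * φ t := by
  refine ⟨C₁ / η, by positivity, fun t ht ht1 => ?_⟩
  have hφt : 0 < φ t := hφpos t ht ht1
  have htη : (0:ℝ) < t ^ η := Real.rpow_pos_of_pos ht η
  set K : ℝ := C₁ * φ t / t ^ η with hK
  have hKpos : 0 < K := by positivity
  -- the dominating function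
  set g : ℝ → ℝ := fun s => K * s ^ (η - 1) with hg
  have hg_int : IntervalIntegrable g volume 0 t :=
    (intervalIntegral.intervalIntegrable_rpow' (by linarith)).const_mul K
  -- pointwise bound on (0, t]
  have hbound : ∀ x : ℝ, 0 < x → x ≤ t → φ x / x ≤ g x := by
    intro x hx hxt
    have hxt' : x / t ≤ 1 := (div_le_one ht).mpr hxt
    have hxtpos : 0 < x / t := div_pos hx ht
    have key := hindex t (x / t) ht ht1 hxtpos hxt'
    rw [mul_div_cancel₀ _ (ne_of_gt ht)] at key
    have hxne : x ≠ 0 := ne_of_gt hx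
    have heq : C₁ * (x / t) ^ η * φ t / x = g x := by
      simp only [hg, hK]
      rw [Real.div_rpow hx.le ht.le, Real.rpow_sub hx, Real.rpow_one]
      field_simp
    calc φ x / x ≤ C₁ * (x / t) ^ η * φ t / x := (div_le_div_iff_of_pos_right hx).mpr key
      _ = g x := heq
  -- nonnegativity of φ x / x on (0,t]
  have hnn : ∀ x : ℝ, 0 < x → x ≤ t → 0 ≤ φ x / x := fun x hx hxt =>
    div_nonneg (hφpos x hx (hxt.trans ht1)).le hx.le
  -- measurability
  have hψmono : Monotone fun s : ℝ => φ (min (max s 0) 1) := by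
    intro a b hab
    exact hφmono ⟨le_min (le_max_right a 0) zero_le_one, min_le_right _ _⟩
      ⟨le_min (le_max_right b 0) zero_le_one, min_le_right _ _⟩
      (min_le_min (max_le_max hab le_rfl) le_rfl)
  have hf_meas : AEStronglyMeasurable (fun s : ℝ => φ s / s)
      (volume.restrict (Set.uIoc (0:ℝ) t)) := by
    have hm : Measurable fun s : ℝ => φ (min (max s 0) 1) / s :=
      hψmono.measurable.div measurable_id
    refine hm.aestronglyMeasurable.congr ?_
    rw [Set.uIoc_of_le ht.le]
    filter_upwards [ae_restrict_mem measurableSet_Ioc] with x hx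
    rw [max_eq_left hx.1.le, min_eq_left (hx.2.trans ht1)]
  -- integrability of φ s / s on [0, t]
  have hf_int : IntervalIntegrable (fun s => φ s / s) volume 0 t := by
    refine hg_int.mono_fun hf_meas ?_
    rw [Set.uIoc_of_le ht.le]
    filter_upwards [ae_restrict_mem measurableSet_Ioc] with x hx
    have h1 : 0 ≤ φ x / x := hnn x hx.1 hx.2
    have h2 : φ x / x ≤ g x := hbound x hx.1 hx.2
    rw [Real.norm_of_nonneg h1, Real.norm_of_nonneg (h1.trans h2)]
    exact h2
  have hae0 : ∀ᵐ x : ℝ ∂volume, x ≠ 0 := by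
    refine (ae_iff).mpr ?_
    simpa using Real.volume_singleton (a := 0)
  constructor
  · -- lower bound
    have hmono : ∀ᵐ x ∂(volume.restrict (Set.Icc (0:ℝ) t)), φ t / t ≤ φ x / x := by
      filter_upwards [ae_restrict_mem measurableSet_Icc, ae_restrict_of_ae hae0]
        with x hx hx0
      have hxpos : 0 < x := lt_of_le_of_ne hx.1 (Ne.symm hx0)
      have hb : 0 ≤ x / t := (div_pos hxpos ht).le
      have ha : 0 ≤ 1 - x / t := by
        have : x / t ≤ 1 := (div_le_one ht).mpr hx.2
        linarith
      have hconc := hφconc.2 (x := 0) ⟨le_rfl, zero_le_one⟩ (y := t) ⟨ht.le, ht1⟩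
        ha hb (by ring)
      rw [smul_eq_mul, smul_eq_mul, smul_eq_mul, smul_eq_mul, mul_zero, zero_add,
        div_mul_cancel₀ _ (ne_of_gt ht), hφ0, mul_zero, zero_add] at hconc
      rw [div_le_div_iff₀ ht hxpos]
      have := mul_le_mul_of_nonneg_right hconc ht.le
      calc φ t * x = x / t * φ t * t := by field_simp
        _ ≤ φ x * t := this
    have hconst : (∫ _ in (0:ℝ)..t, φ t / t) = φ t := by
      rw [intervalIntegral.integral_const, smul_eq_mul, sub_zero,
        mul_div_cancel₀ _ (ne_of_gt ht)]
    calc φ t = ∫ _ in (0:ℝ)..t, φ t / t := hconst.symm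
      _ ≤ ∫ s in (0:ℝ)..t, φ s / s :=
        intervalIntegral.integral_mono_ae_restrict ht.le intervalIntegrable_const
          hf_int hmono
  · -- upper bound
    have hle : ∀ᵐ x ∂(volume.restrict (Set.Icc (0:ℝ) t)), φ x / x ≤ g x := by
      filter_upwards [ae_restrict_mem measurableSet_Icc, ae_restrict_of_ae hae0]
        with x hx hx0
      exact hbound x (lt_of_le_of_ne hx.1 (Ne.symm hx0)) hx.2
    have hgval : (∫ s in (0:ℝ)..t, g s) = C₁ / η * φ t := by
      rw [intervalIntegral.integral_const_mul, integral_rpow (Or.inl (by linarith))]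
      rw [sub_add_cancel, Real.zero_rpow (ne_of_gt hη), sub_zero, hK]
      field_simp
    calc (∫ s in (0:ℝ)..t, φ s / s) ≤ ∫ s in (0:ℝ)..t, g s :=
        intervalIntegral.integral_mono_ae_restrict ht.le hf_int hg_int hle
      _ = C₁ / η * φ t := hgval
end

section
/- For every f ∈ L₁[0,1] and t > 0, the Peetre K-functional of f with respect to the couple (L₁, L∞) satisfies K(t, f; L₁, L∞) = ∫₀^{min(t,1)} f*(s) ds, where f* is the non-increasing rearrangement of |f|. -/
open MeasureTheory

/-- The decreasing rearrangement of `|f|` with respect to Lebesgue measure on `[0,1]`. -/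
noncomputable def decRearr (f : ℝ → ℝ) (t : ℝ) : ℝ :=
  sInf {τ : ℝ | 0 ≤ τ ∧
    (volume {s : ℝ | s ∈ Set.Icc (0:ℝ) 1 ∧ τ < |f s|}).toReal ≤ t}

/-- The Peetre K-functional of `f` for the couple `(L₁[0,1], L∞[0,1])`. -/
noncomputable def KL1Linf (t : ℝ) (f : ℝ → ℝ) : ℝ :=
  sInf {r : ℝ | ∃ g h : ℝ → ℝ,
    (∀ x ∈ Set.Icc (0:ℝ) 1, f x = g x + h x) ∧
    IntegrableOn g (Set.Icc (0:ℝ) 1) ∧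
    MemLp h ⊤ (volume.restrict (Set.Icc (0:ℝ) 1)) ∧
    r = (∫ x in Set.Icc (0:ℝ) 1, |g x|) +
      t * (eLpNorm h ⊤ (volume.restrict (Set.Icc (0:ℝ) 1))).toReal}

namespace KAux

open Set
open scoped ENNReal NNReal

noncomputable def m01 : Measure ℝ := volume.restrict (Set.Icc (0:ℝ) 1)

instance : IsFiniteMeasure m01 := by
  constructor
  rw [m01, Measure.restrict_apply_univ, Real.volume_Icc]
  simp

noncomputable def dd (f : ℝ → ℝ) (τ : ℝ) : ℝ≥0∞ := m01 {x | τ < |f x|}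

noncomputable def D (f : ℝ → ℝ) (τ : ℝ) : ℝ := (dd f τ).toReal

lemma dd_eq (f : ℝ → ℝ) (τ : ℝ) :
    volume {s : ℝ | s ∈ Set.Icc (0:ℝ) 1 ∧ τ < |f s|} = dd f τ := by
  rw [dd, m01, Measure.restrict_apply' measurableSet_Icc]
  congr 1
  ext x
  simp [and_comm]

lemma decRearr_eq (f : ℝ → ℝ) (s : ℝ) :
    decRearr f s = sInf {τ : ℝ | 0 ≤ τ ∧ D f τ ≤ s} := by
  unfold decRearr D
  congr 1
  ext τ
  simp only [Set.mem_setOf_eq, dd_eq]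

lemma dd_le_one (f : ℝ → ℝ) (τ : ℝ) : dd f τ ≤ 1 := by
  calc dd f τ ≤ m01 Set.univ := measure_mono (Set.subset_univ _)
  _ = 1 := by rw [m01, Measure.restrict_apply_univ, Real.volume_Icc]; simp

lemma dd_ne_top (f : ℝ → ℝ) (τ : ℝ) : dd f τ ≠ ⊤ :=
  ((dd_le_one f τ).trans_lt ENNReal.one_lt_top).ne

lemma dd_anti (f : ℝ → ℝ) {τ τ' : ℝ} (h : τ ≤ τ') : dd f τ' ≤ dd f τ :=
  measure_mono (fun x hx => lt_of_le_of_lt h hx)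

lemma D_nonneg (f : ℝ → ℝ) (τ : ℝ) : 0 ≤ D f τ := ENNReal.toReal_nonneg

lemma D_le_one (f : ℝ → ℝ) (τ : ℝ) : D f τ ≤ 1 := by
  rw [D]
  have := dd_le_one f τ
  calc (dd f τ).toReal ≤ (1 : ℝ≥0∞).toReal :=
    ENNReal.toReal_mono ENNReal.one_ne_top this
  _ = 1 := by simp

lemma D_anti (f : ℝ → ℝ) {τ τ' : ℝ} (h : τ ≤ τ') : D f τ' ≤ D f τ :=
  ENNReal.toReal_mono (dd_ne_top f τ) (dd_anti f h)

/-- Right continuity (as an inequality). -/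
lemma D_right_cont (f : ℝ → ℝ) {τ s : ℝ} (hs : 0 ≤ s)
    (h : ∀ τ' > τ, D f τ' ≤ s) : D f τ ≤ s := by
  have hU : {x : ℝ | τ < |f x|} = ⋃ n : ℕ, {x | τ + 1/(n+1) < |f x|} := by
    ext x
    simp only [Set.mem_setOf_eq, Set.mem_iUnion]
    constructor
    · intro hx
      obtain ⟨n, hn⟩ := exists_nat_one_div_lt (sub_pos.mpr hx)
      exact ⟨n, by linarith⟩
    · rintro ⟨n, hn⟩
      have : (0:ℝ) < 1/(n+1) := by positivity
      linarith
  have hdir : Directed (fun x1 x2 => x1 ⊆ x2) (fun n : ℕ => {x | τ + 1/(n+1) < |f x|}) := by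
    apply Monotone.directed_le
    intro a b hab x hx
    simp only [Set.mem_setOf_eq] at hx ⊢
    have : (1:ℝ)/(b+1) ≤ 1/(a+1) := by
      apply one_div_le_one_div_of_le (by positivity)
      push_cast
      linarith [(by exact_mod_cast hab : (a:ℝ) ≤ b)]
    linarith
  have : dd f τ = ⨆ n : ℕ, dd f (τ + 1/(n+1)) := by
    rw [dd, hU]
    exact hdir.measure_iUnion
  have hsup : dd f τ ≤ ENNReal.ofReal s := by
    rw [this]
    apply iSup_le
    intro n
    have h1 : (0:ℝ) < 1/((n:ℝ)+1) := by positivity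
    have h2 : D f (τ + 1/((n:ℝ)+1)) ≤ s := h _ (by linarith)
    calc dd f (τ + 1/((n:ℝ)+1))
        = ENNReal.ofReal (D f (τ + 1/((n:ℝ)+1))) := by
          rw [D, ENNReal.ofReal_toReal (dd_ne_top f _)]
      _ ≤ ENNReal.ofReal s := ENNReal.ofReal_le_ofReal h2
  rw [D]
  calc (dd f τ).toReal ≤ (ENNReal.ofReal s).toReal :=
        ENNReal.toReal_mono ENNReal.ofReal_ne_top hsup
    _ = s := ENNReal.toReal_ofReal hs


/-- Markov: the sublevel condition can be met. -/
lemma exists_D_le {f : ℝ → ℝ} (hf : IntegrableOn f (Set.Icc (0:ℝ) 1))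
    {s : ℝ} (hs : 0 < s) : ∃ τ : ℝ, 0 ≤ τ ∧ D f τ ≤ s := by
  set L : ℝ≥0∞ := ∫⁻ x, ENNReal.ofReal |f x| ∂m01 with hL
  have hLfin : L ≠ ⊤ := by
    have h1 : HasFiniteIntegral f m01 := hf.2
    rw [hasFiniteIntegral_iff_norm] at h1
    simp only [Real.norm_eq_abs] at h1
    exact h1.ne
  have hmeas : AEMeasurable (fun x => ENNReal.ofReal |f x|) m01 :=
    ((continuous_abs.measurable.comp_aemeasurable hf.1.aemeasurable)).ennreal_ofReal
  set τ := max 1 (L.toReal / s) with hτ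
  have hτ1 : (1:ℝ) ≤ τ := le_max_left _ _
  have hτpos : (0:ℝ) < τ := by linarith
  refine ⟨τ, by linarith, ?_⟩
  have hmarkov : ENNReal.ofReal τ * dd f τ ≤ L := by
    calc ENNReal.ofReal τ * dd f τ
        ≤ ENNReal.ofReal τ * m01 {x | ENNReal.ofReal τ ≤ ENNReal.ofReal |f x|} := by
          apply mul_le_mul_right
          apply measure_mono
          intro x hx
          exact ENNReal.ofReal_le_ofReal (le_of_lt hx)
      _ ≤ L := mul_meas_ge_le_lintegral₀ hmeas _
  have hdd : dd f τ ≤ L / ENNReal.ofReal τ := by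
    rw [ENNReal.le_div_iff_mul_le (Or.inl (by simp [hτpos])) (Or.inl ENNReal.ofReal_ne_top)]
    rw [mul_comm]
    exact hmarkov
  have : D f τ ≤ (L / ENNReal.ofReal τ).toReal :=
    ENNReal.toReal_mono (by
      simp only [Ne, ENNReal.div_eq_top]
      push_neg
      exact ⟨fun _ => by simp [hτpos], fun h => absurd h hLfin⟩) hdd
  refine this.trans ?_
  rw [ENNReal.toReal_div, ENNReal.toReal_ofReal hτpos.le]
  rw [div_le_iff₀ hτpos]
  have h2 : L.toReal / s ≤ τ := le_max_right _ _
  calc L.toReal = (L.toReal / s) * s := by field_simp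
    _ ≤ τ * s := by nlinarith [hs]
    _ = s * τ := mul_comm _ _

lemma rearr_nonneg (f : ℝ → ℝ) (s : ℝ) : 0 ≤ decRearr f s := by
  rw [decRearr_eq]
  exact Real.sInf_nonneg (fun x hx => hx.1)

lemma bddBelow_A (f : ℝ → ℝ) (s : ℝ) : BddBelow {τ : ℝ | 0 ≤ τ ∧ D f τ ≤ s} :=
  ⟨0, fun τ hτ => hτ.1⟩

lemma rearr_mem {f : ℝ → ℝ} (hf : IntegrableOn f (Set.Icc (0:ℝ) 1))
    {s : ℝ} (hs : 0 < s) : 0 ≤ decRearr f s ∧ D f (decRearr f s) ≤ s := by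
  refine ⟨rearr_nonneg f s, ?_⟩
  obtain ⟨τ₀, hτ₀0, hτ₀⟩ := exists_D_le hf hs
  have hne : Set.Nonempty {τ : ℝ | 0 ≤ τ ∧ D f τ ≤ s} := ⟨τ₀, hτ₀0, hτ₀⟩
  apply D_right_cont f hs.le
  intro τ' hτ'
  rw [decRearr_eq] at hτ'
  obtain ⟨τ, hτmem, hττ'⟩ := exists_lt_of_csInf_lt hne hτ'
  exact le_trans (D_anti f hττ'.le) hτmem.2

lemma rearr_le_iff {f : ℝ → ℝ} (hf : IntegrableOn f (Set.Icc (0:ℝ) 1))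
    {s u : ℝ} (hs : 0 < s) (hu : 0 ≤ u) :
    decRearr f s ≤ u ↔ D f u ≤ s := by
  constructor
  · intro h
    exact le_trans (D_anti f h) (rearr_mem hf hs).2
  · intro h
    rw [decRearr_eq]
    exact csInf_le (bddBelow_A f s) ⟨hu, h⟩

lemma lt_rearr_iff {f : ℝ → ℝ} (hf : IntegrableOn f (Set.Icc (0:ℝ) 1))
    {s u : ℝ} (hs : 0 < s) (hu : 0 ≤ u) :
    u < decRearr f s ↔ s < D f u := by
  rw [← not_le, ← not_le, not_iff_not]
  exact rearr_le_iff hf hs hu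

lemma rearr_anti {f : ℝ → ℝ} (hf : IntegrableOn f (Set.Icc (0:ℝ) 1))
    {s s' : ℝ} (hs : 0 < s) (hss' : s ≤ s') :
    decRearr f s' ≤ decRearr f s := by
  rw [decRearr_eq, decRearr_eq]
  apply csInf_le_csInf (bddBelow_A f s')
  · obtain ⟨τ₀, h0, h1⟩ := exists_D_le hf hs
    exact ⟨τ₀, h0, h1⟩
  · intro τ hτ
    exact ⟨hτ.1, hτ.2.trans hss'⟩

/-- A generic bound: decRearr f ≤ decRearr g + M if |f| ≤ |g| + M a.e. -/
lemma rearr_le_add {f g : ℝ → ℝ} (hg : IntegrableOn g (Set.Icc (0:ℝ) 1))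
    {M : ℝ} (hM : 0 ≤ M) (hae : ∀ᵐ x ∂m01, |f x| ≤ |g x| + M)
    {s : ℝ} (hs : 0 < s) : decRearr f s ≤ decRearr g s + M := by
  obtain ⟨hg0, hgD⟩ := rearr_mem hg hs
  have hsub : dd f (decRearr g s + M) ≤ dd g (decRearr g s) := by
    apply measure_mono_ae
    filter_upwards [hae] with x hx
    intro hmem
    have h1 : decRearr g s + M < |f x| := hmem
    show decRearr g s < |g x|
    linarith
  have hD : D f (decRearr g s + M) ≤ s :=
    le_trans (ENNReal.toReal_mono (dd_ne_top g _) hsub) hgD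
  rw [decRearr_eq]
  exact csInf_le (bddBelow_A f s) ⟨by linarith, hD⟩


/-- Superlevel sets of decRearr within `Ioc 0 t₀` are ord-connected, hence measurable. -/
lemma sublevel_meas {f : ℝ → ℝ} (hf : IntegrableOn f (Set.Icc (0:ℝ) 1))
    (t₀ c : ℝ) : MeasurableSet (Set.Ioc (0:ℝ) t₀ ∩ {s | decRearr f s < c}) := by
  apply Set.OrdConnected.measurableSet
  constructor
  rintro x ⟨hx1, hx2⟩ y ⟨hy1, _⟩ z hz
  have hz1 : z ∈ Set.Ioc (0:ℝ) t₀ := ⟨lt_of_lt_of_le hx1.1 hz.1, le_trans hz.2 hy1.2⟩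
  refine ⟨hz1, ?_⟩
  have : decRearr f z ≤ decRearr f x := rearr_anti hf hx1.1 hz.1
  exact lt_of_le_of_lt this hx2

lemma rearr_indicator_measurable {f : ℝ → ℝ} (hf : IntegrableOn f (Set.Icc (0:ℝ) 1))
    (t₀ : ℝ) : Measurable ((Set.Ioc (0:ℝ) t₀).indicator (decRearr f)) := by
  apply measurable_of_Iio
  intro c
  by_cases hc : 0 < c
  · have : (Set.Ioc (0:ℝ) t₀).indicator (decRearr f) ⁻¹' Set.Iio c =
        (Set.Ioc (0:ℝ) t₀ ∩ {s | decRearr f s < c}) ∪ (Set.Ioc (0:ℝ) t₀)ᶜ := by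
      ext x
      by_cases hx : x ∈ Set.Ioc (0:ℝ) t₀ <;>
        simp [Set.indicator_of_mem, Set.indicator_of_notMem, hx, hc]
    rw [this]
    exact (sublevel_meas hf t₀ c).union measurableSet_Ioc.compl
  · have : (Set.Ioc (0:ℝ) t₀).indicator (decRearr f) ⁻¹' Set.Iio c =
        (Set.Ioc (0:ℝ) t₀ ∩ {s | decRearr f s < c}) := by
      ext x
      by_cases hx : x ∈ Set.Ioc (0:ℝ) t₀ <;>
        simp [Set.indicator_of_mem, Set.indicator_of_notMem, hx, hc]
    rw [this]
    exact sublevel_meas hf t₀ c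

lemma rearr_aemeasurable {f : ℝ → ℝ} (hf : IntegrableOn f (Set.Icc (0:ℝ) 1))
    (t₀ : ℝ) : AEMeasurable (decRearr f) (volume.restrict (Set.Ioc (0:ℝ) t₀)) := by
  have h1 := (rearr_indicator_measurable hf t₀).aemeasurable
    (μ := volume.restrict (Set.Ioc (0:ℝ) t₀))
  apply h1.congr
  exact indicator_ae_eq_restrict measurableSet_Ioc

/-- The key layer-cake identity. -/
lemma key {f : ℝ → ℝ} (hf : IntegrableOn f (Set.Icc (0:ℝ) 1))
    {t₀ lam : ℝ} (ht₀ : 0 < t₀) (hlam : 0 ≤ lam)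
    (hD : ∀ u, 0 < u → D f (lam + u) ≤ t₀) :
    ∫⁻ s in Set.Ioc (0:ℝ) t₀, ENNReal.ofReal (max (decRearr f s - lam) 0)
      = ∫⁻ x in Set.Icc (0:ℝ) 1, ENNReal.ofReal (max (|f x| - lam) 0) := by
  have hGmble : AEMeasurable (fun s => max (decRearr f s - lam) 0)
      (volume.restrict (Set.Ioc (0:ℝ) t₀)) :=
    ((rearr_aemeasurable hf t₀).sub aemeasurable_const).max aemeasurable_const
  have hHmble : AEMeasurable (fun x => max (|f x| - lam) 0) m01 :=
    (((continuous_abs.measurable.comp_aemeasurable hf.1.aemeasurable)).sub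
      aemeasurable_const).max aemeasurable_const
  have e1 := lintegral_eq_lintegral_meas_lt (f := fun s => max (decRearr f s - lam) 0)
    (volume.restrict (Set.Ioc (0:ℝ) t₀))
    (Filter.Eventually.of_forall fun s => le_max_right _ _) hGmble
  have e2 := lintegral_eq_lintegral_meas_lt (f := fun x => max (|f x| - lam) 0)
    m01 (Filter.Eventually.of_forall fun x => le_max_right _ _) hHmble
  rw [show (volume.restrict (Set.Icc (0:ℝ) 1)) = m01 from rfl, e1, e2]
  apply setLIntegral_congr_fun measurableSet_Ioi
  intro u hu
  have hu0 : (0:ℝ) < u := hu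
  have hlu : 0 ≤ lam + u := by linarith
  -- LHS measure
  have hL : (volume.restrict (Set.Ioc (0:ℝ) t₀)) {a | u < max (decRearr f a - lam) 0}
      = dd f (lam + u) := by
    rw [Measure.restrict_apply' measurableSet_Ioc]
    have hset : {a | u < max (decRearr f a - lam) 0} ∩ Set.Ioc (0:ℝ) t₀
        = Set.Ioo (0:ℝ) (D f (lam + u)) := by
      ext s
      simp only [Set.mem_inter_iff, Set.mem_setOf_eq, Set.mem_Ioc, Set.mem_Ioo]
      constructor
      · rintro ⟨h1, h2, h3⟩
        have h4 : u < decRearr f s - lam := by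
          rcases max_cases (decRearr f s - lam) 0 with ⟨he, _⟩ | ⟨he, _⟩ <;> rw [he] at h1
          · exact h1
          · linarith
        have : lam + u < decRearr f s := by linarith
        exact ⟨h2, (lt_rearr_iff hf h2 hlu).mp this⟩
      · rintro ⟨h1, h2⟩
        have h3 : lam + u < decRearr f s := (lt_rearr_iff hf h1 hlu).mpr h2
        have h4 : s ≤ t₀ := le_trans h2.le (hD u hu0)
        exact ⟨by rw [max_eq_left (by linarith : (0:ℝ) ≤ decRearr f s - lam)]; linarith,
          h1, h4⟩
    rw [hset, Real.volume_Ioo, sub_zero, D, ENNReal.ofReal_toReal (dd_ne_top f _)]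
  have hR : m01 {a | u < max (|f a| - lam) 0} = dd f (lam + u) := by
    rw [dd]
    congr 1
    ext x
    simp only [Set.mem_setOf_eq]
    constructor
    · intro h1
      rcases max_cases (|f x| - lam) 0 with ⟨he, _⟩ | ⟨he, _⟩ <;> rw [he] at h1
      · linarith
      · linarith
    · intro h1
      rw [max_eq_left (by linarith : (0:ℝ) ≤ |f x| - lam)]
      linarith
  exact hL.trans hR.symm


lemma trunc_integrable {f : ℝ → ℝ} (hf : IntegrableOn f (Set.Icc (0:ℝ) 1))
    {lam : ℝ} (hlam : 0 ≤ lam) :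
    Integrable (fun x => max (|f x| - lam) 0) m01 := by
  have hmble : AEMeasurable (fun x => max (|f x| - lam) 0) m01 :=
    (((continuous_abs.measurable.comp_aemeasurable hf.1.aemeasurable)).sub
      aemeasurable_const).max aemeasurable_const
  apply Integrable.mono (hf.abs) ((aestronglyMeasurable_iff_aemeasurable).mpr hmble)
  apply Filter.Eventually.of_forall
  intro x
  rw [Real.norm_eq_abs, Real.norm_eq_abs, abs_abs,
    abs_of_nonneg (le_max_right _ _)]
  rcases max_cases (|f x| - lam) 0 with ⟨he, _⟩ | ⟨he, _⟩ <;> rw [he]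
  · linarith [abs_nonneg (f x)]
  · exact abs_nonneg _

/-- Real-valued version of `key`, plus integrability of the left-hand side. -/
lemma key_real {f : ℝ → ℝ} (hf : IntegrableOn f (Set.Icc (0:ℝ) 1))
    {t₀ lam : ℝ} (ht₀ : 0 < t₀) (hlam : 0 ≤ lam)
    (hD : ∀ u, 0 < u → D f (lam + u) ≤ t₀) :
    IntegrableOn (fun s => max (decRearr f s - lam) 0) (Set.Ioc (0:ℝ) t₀) ∧
    ∫ s in Set.Ioc (0:ℝ) t₀, max (decRearr f s - lam) 0
      = ∫ x in Set.Icc (0:ℝ) 1, max (|f x| - lam) 0 := by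
  have hGmble : AEMeasurable (fun s => max (decRearr f s - lam) 0)
      (volume.restrict (Set.Ioc (0:ℝ) t₀)) :=
    ((rearr_aemeasurable hf t₀).sub aemeasurable_const).max aemeasurable_const
  have hkey := key hf ht₀ hlam hD
  have hHint : Integrable (fun x => max (|f x| - lam) 0) m01 := trunc_integrable hf hlam
  have hHfin : ∫⁻ x in Set.Icc (0:ℝ) 1, ENNReal.ofReal (max (|f x| - lam) 0) < ⊤ := by
    have h2 := hHint.2
    rw [hasFiniteIntegral_iff_norm] at h2
    have h3 : ∫⁻ x in Set.Icc (0:ℝ) 1, ENNReal.ofReal (max (|f x| - lam) 0)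
        = ∫⁻ a, ENNReal.ofReal ‖max (|f a| - lam) 0‖ ∂m01 := by
      apply lintegral_congr
      intro a
      rw [Real.norm_eq_abs, abs_of_nonneg (le_max_right (|f a| - lam) (0:ℝ))]
    rw [h3]
    exact h2
  have hGint : IntegrableOn (fun s => max (decRearr f s - lam) 0) (Set.Ioc (0:ℝ) t₀) := by
    constructor
    · exact (aestronglyMeasurable_iff_aemeasurable).mpr hGmble
    · rw [hasFiniteIntegral_iff_norm]
      have : ∀ s : ℝ, ENNReal.ofReal ‖max (decRearr f s - lam) 0‖
          = ENNReal.ofReal (max (decRearr f s - lam) 0) := by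
        intro s
        rw [Real.norm_eq_abs, abs_of_nonneg (le_max_right _ _)]
      simp only [this]
      rw [hkey]
      exact hHfin
  refine ⟨hGint, ?_⟩
  have i1 := integral_eq_lintegral_of_nonneg_ae (μ := volume.restrict (Set.Ioc (0:ℝ) t₀))
      (f := fun s => max (decRearr f s - lam) 0)
      (Filter.Eventually.of_forall fun s => le_max_right _ _) hGint.1
  have i2 := integral_eq_lintegral_of_nonneg_ae (μ := m01)
      (f := fun x => max (|f x| - lam) 0)
      (Filter.Eventually.of_forall fun x => le_max_right _ _) hHint.1
  rw [show (volume.restrict (Set.Icc (0:ℝ) 1)) = m01 from rfl, i1, i2, hkey]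
  rfl

/-- Total mass identity: `∫₀¹ f* = ∫ |f|`. -/
lemma mass {f : ℝ → ℝ} (hf : IntegrableOn f (Set.Icc (0:ℝ) 1)) :
    IntegrableOn (decRearr f) (Set.Ioc (0:ℝ) 1) ∧
    ∫ s in Set.Ioc (0:ℝ) 1, decRearr f s = ∫ x in Set.Icc (0:ℝ) 1, |f x| := by
  have h := key_real hf (t₀ := 1) (lam := 0) one_pos le_rfl
    (fun u hu => D_le_one f _)
  have e1 : (fun s => max (decRearr f s - 0) 0) = decRearr f := by
    funext s
    rw [sub_zero, max_eq_left (rearr_nonneg f s)]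
  have e2 : (fun x => max (|f x| - 0) 0) = fun x => |f x| := by
    funext x
    rw [sub_zero, max_eq_left (abs_nonneg _)]
  rw [e1, e2] at h
  exact h

end KAux


open Set KAux

/-- `K(t, f; L₁, L∞) = ∫₀^{min(t,1)} f*(s) ds`. -/
theorem stmt_9 (f : ℝ → ℝ) (hf : IntegrableOn f (Set.Icc (0:ℝ) 1))
    (t : ℝ) (ht : 0 < t) :
    KL1Linf t f = ∫ s in (0:ℝ)..(min t 1), decRearr f s := by
  classical
  set t₀ := min t 1 with ht₀def
  have ht₀ : 0 < t₀ := lt_min ht one_pos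
  have ht₀1 : t₀ ≤ 1 := min_le_right _ _
  have ht₀t : t₀ ≤ t := min_le_left _ _
  have hRHS : ∫ s in (0:ℝ)..t₀, decRearr f s = ∫ s in Set.Ioc (0:ℝ) t₀, decRearr f s :=
    intervalIntegral.integral_of_le ht₀.le
  set V := ∫ s in Set.Ioc (0:ℝ) t₀, decRearr f s with hV
  rw [hRHS]
  set SS := {r : ℝ | ∃ g h : ℝ → ℝ,
    (∀ x ∈ Set.Icc (0:ℝ) 1, f x = g x + h x) ∧
    IntegrableOn g (Set.Icc (0:ℝ) 1) ∧
    MemLp h ⊤ (volume.restrict (Set.Icc (0:ℝ) 1)) ∧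
    r = (∫ x in Set.Icc (0:ℝ) 1, |g x|) +
      t * (eLpNorm h ⊤ (volume.restrict (Set.Icc (0:ℝ) 1))).toReal} with hSS
  have hKL : KL1Linf t f = sInf SS := rfl
  rw [hKL]
  obtain ⟨hfint1, hfmass⟩ := mass hf
  -- lower bound : every element of SS is ≥ V
  have hlow : ∀ r ∈ SS, V ≤ r := by
    rintro r ⟨g, h, hsum, hg, hh, hr⟩
    set M := (eLpNorm h ⊤ (volume.restrict (Set.Icc (0:ℝ) 1))).toReal with hMdef
    have hM0 : 0 ≤ M := ENNReal.toReal_nonneg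
    have hMe : M = (eLpNormEssSup h (volume.restrict (Set.Icc (0:ℝ) 1))).toReal := by
      rw [hMdef, eLpNorm_exponent_top]
    have hhae : ∀ᵐ x ∂(volume.restrict (Set.Icc (0:ℝ) 1)), |h x| ≤ M := by
      filter_upwards [ae_le_eLpNormEssSup (f := h)
        (μ := volume.restrict (Set.Icc (0:ℝ) 1))] with x hx
      have h2 : eLpNormEssSup h (volume.restrict (Set.Icc (0:ℝ) 1)) ≠ ⊤ := by
        rw [← eLpNorm_exponent_top]
        exact hh.2.ne
      have h3 := ENNReal.toReal_mono h2 hx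
      rw [toReal_enorm, Real.norm_eq_abs] at h3
      rw [hMe]
      exact h3
    have hfae : ∀ᵐ x ∂(volume.restrict (Set.Icc (0:ℝ) 1)), |f x| ≤ |g x| + M := by
      filter_upwards [ae_restrict_mem (measurableSet_Icc (a := (0:ℝ)) (b := 1)), hhae]
        with x hx1 hx2
      rw [hsum x hx1]
      calc |g x + h x| ≤ |g x| + |h x| := abs_add_le _ _
        _ ≤ |g x| + M := by linarith
    have hcomp : ∀ s ∈ Set.Ioc (0:ℝ) t₀, decRearr f s ≤ decRearr g s + M :=
      fun s hs => rearr_le_add hg hM0 hfae hs.1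
    obtain ⟨hgint1, hgmass⟩ := mass hg
    have hfint : IntegrableOn (decRearr f) (Set.Ioc (0:ℝ) t₀) :=
      hfint1.mono_set (Set.Ioc_subset_Ioc le_rfl ht₀1)
    have hgint : IntegrableOn (decRearr g) (Set.Ioc (0:ℝ) t₀) :=
      hgint1.mono_set (Set.Ioc_subset_Ioc le_rfl ht₀1)
    have hconst : IntegrableOn (fun _ : ℝ => M) (Set.Ioc (0:ℝ) t₀) :=
      integrableOn_const measure_Ioc_lt_top.ne
    have step1 : V ≤ ∫ s in Set.Ioc (0:ℝ) t₀, (decRearr g s + M) :=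
      setIntegral_mono_on hfint (hgint.add hconst) measurableSet_Ioc hcomp
    have step2 : ∫ s in Set.Ioc (0:ℝ) t₀, (decRearr g s + M)
        = (∫ s in Set.Ioc (0:ℝ) t₀, decRearr g s) + t₀ * M := by
      rw [integral_add hgint hconst, setIntegral_const, Real.volume_real_Ioc_of_le ht₀.le, sub_zero,
        smul_eq_mul]
    have step3 : ∫ s in Set.Ioc (0:ℝ) t₀, decRearr g s ≤ ∫ s in Set.Ioc (0:ℝ) 1, decRearr g s :=
      setIntegral_mono_set hgint1 (Filter.Eventually.of_forall fun s => rearr_nonneg g s)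
        (HasSubset.Subset.eventuallyLE (Set.Ioc_subset_Ioc le_rfl ht₀1))
    have step4 : t₀ * M ≤ t * M := by nlinarith
    rw [hr]
    calc V ≤ (∫ s in Set.Ioc (0:ℝ) t₀, decRearr g s) + t₀ * M := by
            rw [← step2]; exact step1
      _ ≤ (∫ s in Set.Ioc (0:ℝ) 1, decRearr g s) + t * M := by linarith
      _ = (∫ x in Set.Icc (0:ℝ) 1, |g x|) + t * M := by rw [hgmass]
  -- the trivial decomposition (f, 0)
  have hmem1 : (∫ x in Set.Icc (0:ℝ) 1, |f x|) ∈ SS := by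
    refine ⟨f, fun _ => 0, fun x _ => (add_zero _).symm, hf, MemLp.zero', ?_⟩
    have hz : eLpNorm (fun _ : ℝ => (0:ℝ)) ⊤ (volume.restrict (Set.Icc (0:ℝ) 1)) = 0 :=
      eLpNorm_zero'
    rw [hz]
    simp
  have hbdd : BddBelow SS := ⟨V, hlow⟩
  have hne : SS.Nonempty := ⟨_, hmem1⟩
  refine le_antisymm ?_ (le_csInf hne hlow)
  -- upper bound
  by_cases htc : 1 < t
  · -- t₀ = 1, use the trivial decomposition
    have h1 : t₀ = 1 := min_eq_right htc.le
    apply csInf_le_of_le hbdd hmem1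
    rw [hV, h1, hfmass]
  · push_neg at htc
    have h1 : t₀ = t := min_eq_left htc
    set lam := decRearr f t₀ with hlamdef
    have hlam0 : 0 ≤ lam := rearr_nonneg f t₀
    set h : ℝ → ℝ := fun x => max (-lam) (min lam (f x)) with hhdef
    set g : ℝ → ℝ := fun x => f x - h x with hgdef
    have habs : ∀ x, |g x| = max (|f x| - lam) 0 := by
      intro x
      rw [hgdef, hhdef]
      simp only []
      rcases le_total (f x) (-lam) with h1' | h1'
      · have e1 : min lam (f x) = f x := min_eq_right (by linarith)
        have e2 : max (-lam) (f x) = -lam := max_eq_left h1'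
        rw [e1, e2]
        have e3 : |f x| = -(f x) := abs_of_nonpos (by linarith)
        have e4 : |f x - -lam| = -(f x - -lam) := abs_of_nonpos (by linarith)
        rw [e3, e4, max_eq_left (by linarith)]
        ring
      · rcases le_total lam (f x) with h2' | h2'
        · have e1 : min lam (f x) = lam := min_eq_left h2'
          have e2 : max (-lam) lam = lam := max_eq_right (by linarith)
          rw [e1, e2]
          have e3 : |f x| = f x := abs_of_nonneg (by linarith)
          have e4 : |f x - lam| = f x - lam := abs_of_nonneg (by linarith)
          rw [e3, e4, max_eq_left (by linarith)]
        · have e1 : min lam (f x) = f x := min_eq_right h2'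
          have e2 : max (-lam) (f x) = f x := max_eq_right h1'
          rw [e1, e2]
          have e3 : |f x| ≤ lam := abs_le.mpr ⟨h1', h2'⟩
          rw [sub_self, abs_zero, max_eq_right (by linarith)]
    have hhb : ∀ x, |h x| ≤ lam := by
      intro x
      rw [hhdef]
      simp only []
      rw [abs_le]
      constructor
      · exact le_max_left _ _
      · apply max_le (by linarith)
        exact min_le_left _ _
    have hhmeas : AEMeasurable h (volume.restrict (Set.Icc (0:ℝ) 1)) := by
      rw [hhdef]
      exact aemeasurable_const.max (aemeasurable_const.min hf.1.aemeasurable)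
    have hmemh : MemLp h ⊤ (volume.restrict (Set.Icc (0:ℝ) 1)) := by
      constructor
      · exact (aestronglyMeasurable_iff_aemeasurable).mpr hhmeas
      · rw [eLpNorm_exponent_top]
        apply lt_of_le_of_lt
          (eLpNormEssSup_le_of_ae_bound (C := lam)
            (Filter.Eventually.of_forall fun x => by rw [Real.norm_eq_abs]; exact hhb x))
        exact ENNReal.ofReal_lt_top
    have hhint : Integrable h (volume.restrict (Set.Icc (0:ℝ) 1)) := by
      have : IsFiniteMeasure (volume.restrict (Set.Icc (0:ℝ) 1)) :=
        (inferInstance : IsFiniteMeasure m01)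
      exact hmemh.integrable le_top
    have hgint : IntegrableOn g (Set.Icc (0:ℝ) 1) := hf.sub hhint
    have hElam : (eLpNorm h ⊤ (volume.restrict (Set.Icc (0:ℝ) 1))).toReal ≤ lam := by
      apply ENNReal.toReal_le_of_le_ofReal hlam0
      rw [eLpNorm_exponent_top]
      exact eLpNormEssSup_le_of_ae_bound (C := lam)
        (Filter.Eventually.of_forall fun x => by rw [Real.norm_eq_abs]; exact hhb x)
    have hmem2 : ((∫ x in Set.Icc (0:ℝ) 1, |g x|) +
        t * (eLpNorm h ⊤ (volume.restrict (Set.Icc (0:ℝ) 1))).toReal) ∈ SS :=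
      ⟨g, h, fun x _ => by rw [hgdef]; ring, hgint, hmemh, rfl⟩
    apply csInf_le_of_le hbdd hmem2
    -- now show r₂ ≤ V
    have hD : ∀ u, 0 < u → D f (lam + u) ≤ t₀ := by
      intro u hu
      rw [← rearr_le_iff hf ht₀ (by linarith)]
      rw [← hlamdef]
      linarith
    obtain ⟨hkint, hkeq⟩ := key_real hf ht₀ hlam0 hD
    have hsplit : V = (∫ x in Set.Icc (0:ℝ) 1, max (|f x| - lam) 0) + t₀ * lam := by
      rw [hV, ← hkeq]
      have e1 : ∫ s in Set.Ioc (0:ℝ) t₀, decRearr f s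
          = ∫ s in Set.Ioc (0:ℝ) t₀, (max (decRearr f s - lam) 0 + lam) := by
        apply setIntegral_congr_fun measurableSet_Ioc
        intro s hs
        have h2 : lam ≤ decRearr f s := rearr_anti hf hs.1 hs.2
        show decRearr f s = max (decRearr f s - lam) 0 + lam
        rw [max_eq_left (by linarith)]
        ring
      rw [e1, integral_add hkint (integrableOn_const measure_Ioc_lt_top.ne),
        setIntegral_const, Real.volume_real_Ioc_of_le ht₀.le, sub_zero,
        smul_eq_mul]
    have hgeq : ∫ x in Set.Icc (0:ℝ) 1, |g x|
        = ∫ x in Set.Icc (0:ℝ) 1, max (|f x| - lam) 0 := by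
      apply setIntegral_congr_fun measurableSet_Icc
      intro x _
      exact habs x
    rw [hgeq, hsplit, h1]
    have : t * (eLpNorm h ⊤ (volume.restrict (Set.Icc (0:ℝ) 1))).toReal ≤ t * lam := by
      nlinarith
    linarith
end

section
/- Let 1 ≤ p < ∞ and let (x_n) be a sequence of unit vectors in a Banach space X with the following property: for every ε ∈ (0,1) and every finite-dimensional subspace F of the closed span of finitely many x_i's, there exists n such that (1-ε)(‖x‖^p + |λ|^p)^{1/p} ≤ ‖x + λ x_n‖ ≤ (1+ε)(‖x‖^p + |λ|^p)^{1/p} for all x ∈ F of norm 1 and all scalars λ. Then for every ε > 0 there is a subsequence (z_j) of (x_n) such that for all scalars (λ_j), (1-ε)(Σ|λ_j|^p)^{1/p} ≤ ‖Σ λ_j z_j‖ ≤ (1+ε)(Σ|λ_j|^p)^{1/p}. -/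
open Finset

lemma key_aux {X : Type*} [NormedAddCommGroup X] [NormedSpace ℝ X]
    (p : ℝ) (hp : 1 ≤ p) (x : ℕ → X) (hx : ∀ n, ‖x n‖ = 1)
    (hyp : ∀ ε : ℝ, 0 < ε → ε < 1 →
      ∀ (s : Finset ℕ) (F : Submodule ℝ X), F ≤ Submodule.span ℝ (x '' ↑s) →
        ∃ n : ℕ, ∀ y ∈ F, ‖y‖ = 1 → ∀ lam : ℝ,
          (1 - ε) * (‖y‖ ^ p + |lam| ^ p) ^ (1 / p) ≤ ‖y + lam • x n‖ ∧
          ‖y + lam • x n‖ ≤ (1 + ε) * (‖y‖ ^ p + |lam| ^ p) ^ (1 / p))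
    (θ : ℝ) (hθ0 : 0 < θ) (hθ1 : θ < 1) (m : ℕ) :
    ∃ n : ℕ, m < n ∧ ∀ y ∈ Submodule.span ℝ (x '' ↑(range (m + 1))), ∀ lam : ℝ,
      (1 - θ) * (‖y‖ ^ p + |lam| ^ p) ^ (1 / p) ≤ ‖y + lam • x n‖ ∧
      ‖y + lam • x n‖ ≤ (1 + θ) * (‖y‖ ^ p + |lam| ^ p) ^ (1 / p) := by
  have hp0 : p ≠ 0 := by positivity
  have hp0' : (0:ℝ) < 1 / p := by positivity
  obtain ⟨n, hn⟩ := hyp θ hθ0 hθ1 (range (m + 1))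
    (Submodule.span ℝ (x '' ↑(range (m + 1)))) le_rfl
  refine ⟨n, ?_, ?_⟩
  · by_contra h
    push_neg at h
    have hmem : x n ∈ Submodule.span ℝ (x '' ↑(range (m + 1))) :=
      Submodule.subset_span ⟨n, by simpa using Nat.lt_succ_of_le h, rfl⟩
    have := (hn (x n) hmem (hx n) (-1)).1
    rw [hx n] at this
    simp only [neg_one_smul, add_neg_cancel, norm_zero] at this
    have h2 : ((1:ℝ) ^ p + |(-1:ℝ)| ^ p) = 2 := by norm_num
    rw [h2] at this
    nlinarith [Real.rpow_pos_of_pos (by norm_num : (0:ℝ) < 2) (1/p)]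
  · intro y hy lam
    rcases eq_or_ne y 0 with rfl | hy0
    · have h0 : ((0:X) : X) = 0 := rfl
      have : (‖(0:X)‖ ^ p + |lam| ^ p) ^ (1/p) = |lam| := by
        rw [norm_zero, Real.zero_rpow hp0, zero_add, one_div,
          Real.rpow_rpow_inv (abs_nonneg _) hp0]
      rw [this]
      constructor
      · rw [zero_add, norm_smul, hx n, mul_one, Real.norm_eq_abs]
        nlinarith [abs_nonneg lam]
      · rw [zero_add, norm_smul, hx n, mul_one, Real.norm_eq_abs]
        nlinarith [abs_nonneg lam]
    · set c := ‖y‖ with hc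
      have hc0 : 0 < c := norm_pos_iff.mpr hy0
      have hyc : ‖c⁻¹ • y‖ = 1 := norm_smul_inv_norm hy0
      have hmem : c⁻¹ • y ∈ Submodule.span ℝ (x '' ↑(range (m + 1))) :=
        Submodule.smul_mem _ _ hy
      obtain ⟨l1, l2⟩ := hn (c⁻¹ • y) hmem hyc (lam / c)
      rw [hyc] at l1 l2
      have heq : ‖c⁻¹ • y + (lam / c) • x n‖ = c⁻¹ * ‖y + lam • x n‖ := by
        rw [div_eq_inv_mul, ← smul_smul, ← smul_add, norm_smul,
          Real.norm_eq_abs, abs_of_pos (inv_pos.mpr hc0)]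
      have hR : c * ((1:ℝ) ^ p + |lam / c| ^ p) ^ (1/p)
          = (c ^ p + |lam| ^ p) ^ (1/p) := by
        have h1 : |lam / c| = |lam| / c := by
          rw [abs_div, abs_of_pos hc0]
        have hcp : (0:ℝ) < c ^ p := Real.rpow_pos_of_pos hc0 p
        have h2 : c = (c ^ p) ^ (1/p) := by
          rw [one_div, Real.rpow_rpow_inv hc0.le hp0]
        calc c * ((1:ℝ) ^ p + |lam / c| ^ p) ^ (1/p)
            = ((c ^ p) * ((1:ℝ) ^ p + |lam / c| ^ p)) ^ (1/p) := by
              rw [Real.mul_rpow hcp.le (by positivity), ← h2]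
          _ = (c ^ p + |lam| ^ p) ^ (1/p) := by
              congr 1
              rw [h1, Real.one_rpow, Real.div_rpow (abs_nonneg _) hc0.le]
              field_simp
      rw [heq] at l1 l2
      have hcc : c * (c⁻¹ * ‖y + lam • x n‖) = ‖y + lam • x n‖ := by
        field_simp
      constructor
      · have h1 : (1 - θ) * (c ^ p + |lam| ^ p) ^ (1/p)
            = c * ((1 - θ) * ((1:ℝ) ^ p + |lam / c| ^ p) ^ (1/p)) := by
          rw [← hR]; ring
        rw [h1, ← hcc]
        exact mul_le_mul_of_nonneg_left l1 hc0.le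
      · have h2 : (1 + θ) * (c ^ p + |lam| ^ p) ^ (1/p)
            = c * ((1 + θ) * ((1:ℝ) ^ p + |lam / c| ^ p) ^ (1/p)) := by
          rw [← hR]; ring
        rw [h2, ← hcc]
        exact mul_le_mul_of_nonneg_left l2 hc0.le

lemma rpow_combine_lower (p : ℝ) (hp : 1 ≤ p) {u B b N : ℝ}
    (hu0 : 0 ≤ u) (hu1 : u ≤ 1) (hB : 0 ≤ B) (hb : 0 ≤ b) (hN0 : 0 ≤ N)
    (hN : u * B ^ (1/p) ≤ N) :
    u * (B + b) ^ (1/p) ≤ (N ^ p + b) ^ (1/p) := by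
  have hp0 : p ≠ 0 := by positivity
  have hup : u ^ p * B ≤ N ^ p := by
    have : (u * B ^ (1/p)) ^ p ≤ N ^ p :=
      Real.rpow_le_rpow (by positivity) hN (by positivity)
    rwa [Real.mul_rpow hu0 (Real.rpow_nonneg hB _), one_div,
      Real.rpow_inv_rpow hB hp0] at this
  have hup1 : u ^ p ≤ 1 := Real.rpow_le_one hu0 hu1 (by positivity)
  have key : u ^ p * (B + b) ≤ N ^ p + b := by nlinarith
  calc u * (B + b) ^ (1/p)
      = (u ^ p * (B + b)) ^ (1/p) := by
        rw [Real.mul_rpow (by positivity) (by positivity), one_div,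
          Real.rpow_rpow_inv hu0 hp0]
    _ ≤ (N ^ p + b) ^ (1/p) :=
        Real.rpow_le_rpow (by positivity) key (by positivity)

lemma rpow_combine_upper (p : ℝ) (hp : 1 ≤ p) {U B b N : ℝ}
    (hU : 1 ≤ U) (hB : 0 ≤ B) (hb : 0 ≤ b) (hN0 : 0 ≤ N)
    (hN : N ≤ U * B ^ (1/p)) :
    (N ^ p + b) ^ (1/p) ≤ U * (B + b) ^ (1/p) := by
  have hp0 : p ≠ 0 := by positivity
  have hU0 : (0:ℝ) ≤ U := le_trans zero_le_one hU
  have hup : N ^ p ≤ U ^ p * B := by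
    have : N ^ p ≤ (U * B ^ (1/p)) ^ p :=
      Real.rpow_le_rpow hN0 hN (by positivity)
    rwa [Real.mul_rpow hU0 (Real.rpow_nonneg hB _), one_div,
      Real.rpow_inv_rpow hB hp0] at this
  have hup1 : 1 ≤ U ^ p := by
    have := Real.rpow_le_rpow zero_le_one hU (by positivity : (0:ℝ) ≤ p)
    rwa [Real.one_rpow] at this
  have key : N ^ p + b ≤ U ^ p * (B + b) := by nlinarith
  calc (N ^ p + b) ^ (1/p)
      ≤ (U ^ p * (B + b)) ^ (1/p) :=
        Real.rpow_le_rpow (by positivity) key (by positivity)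
    _ = U * (B + b) ^ (1/p) := by
        rw [Real.mul_rpow (by positivity) (by positivity), one_div,
          Real.rpow_rpow_inv hU0 hp0]

lemma prod_lower_bound (ε : ℝ) (hε0 : 0 < ε) (hε1 : ε ≤ 1) (l : ℕ) :
    1 - ε ≤ ∏ j ∈ range l, (1 - ε / 2 ^ (j + 2)) := by
  have hsum : ∀ m : ℕ, ∑ j ∈ range m, ε / 2 ^ (j + 2) ≤ ε / 2 - ε / 2 ^ (m + 1) := by
    intro m
    induction m with
    | zero => norm_num
    | succ m ih =>
      rw [sum_range_succ]
      have h2 : (2:ℝ) ^ (m + 1 + 1) = 2 * 2 ^ (m + 1) := by ring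
      have hpos : (0:ℝ) < 2 ^ (m + 1) := by positivity
      have heq : ε / 2 ^ (m + 1) - ε / 2 ^ (m + 1 + 1) = ε / 2 ^ (m + 2) := by
        rw [h2]; field_simp; ring
      linarith
  have hws : ∀ m : ℕ, 1 - ∑ j ∈ range m, ε / 2 ^ (j + 2) ≤
      ∏ j ∈ range m, (1 - ε / 2 ^ (j + 2)) := by
    intro m
    induction m with
    | zero => simp
    | succ m ih =>
      rw [sum_range_succ, prod_range_succ]
      have hθ : ε / 2 ^ (m + 2) ≤ 1 / 4 := by
        have h4 : (4:ℝ) ≤ 2 ^ (m + 2) := by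
          calc (4:ℝ) = 2 ^ 2 := by norm_num
            _ ≤ 2 ^ (m + 2) := by
              apply pow_le_pow_right₀ one_le_two; omega
        rw [div_le_div_iff₀ (by positivity) (by norm_num)]
        nlinarith
      have hsum' := hsum m
      have hθ0 : 0 ≤ ε / 2 ^ (m + 2) := by positivity
      nlinarith [sum_nonneg (fun j (_ : j ∈ range m) => by positivity :
        ∀ j ∈ range m, (0:ℝ) ≤ ε / 2 ^ (j + 2))]
  have h1 := hsum l
  have h2 := hws l
  have : 0 ≤ ε / 2 ^ (l + 1) := by positivity
  linarith

lemma prod_upper_bound (ε : ℝ) (hε0 : 0 < ε) (hε1 : ε ≤ 1) (l : ℕ) :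
    ∏ j ∈ range l, (1 + ε / 2 ^ (j + 2)) ≤ 1 + ε := by
  have key : ∀ m : ℕ, ∏ j ∈ range m, (1 + ε / 2 ^ (j + 2)) ≤
      1 + ε * (1 - (1/2 : ℝ) ^ m) := by
    intro m
    induction m with
    | zero => simp
    | succ m ih =>
      rw [prod_range_succ]
      have ha0 : (0:ℝ) < (1/2 : ℝ) ^ m := by positivity
      have ha1 : (1/2 : ℝ) ^ m ≤ 1 := by
        apply pow_le_one₀ <;> norm_num
      have hθ : ε / 2 ^ (m + 2) = ε * (1/2 : ℝ) ^ m / 4 := by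
        rw [div_pow, one_pow, mul_one_div, div_div, pow_add]
        norm_num
      have hθ0 : 0 ≤ ε / 2 ^ (m + 2) := by positivity
      have hprod0 : 0 ≤ ∏ j ∈ range m, (1 + ε / 2 ^ (j + 2)) :=
        prod_nonneg fun j _ => by positivity
      calc (∏ j ∈ range m, (1 + ε / 2 ^ (j + 2))) * (1 + ε / 2 ^ (m + 2))
          ≤ (1 + ε * (1 - (1/2 : ℝ) ^ m)) * (1 + ε * (1/2 : ℝ) ^ m / 4) := by
            apply mul_le_mul ih (by rw [hθ]) (by positivity) (by nlinarith)
        _ ≤ 1 + ε * (1 - (1/2 : ℝ) ^ (m + 1)) := by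
            have : (1/2 : ℝ) ^ (m + 1) = (1/2 : ℝ) ^ m / 2 := by ring
            rw [this]; nlinarith
  have := key l
  have ha0 : (0:ℝ) < (1/2 : ℝ) ^ l := by positivity
  nlinarith

/-- Gliding-hump extraction of an almost-isometric `l_p`-subsequence. -/
theorem stmt_12 {X : Type*} [NormedAddCommGroup X] [NormedSpace ℝ X]
    (p : ℝ) (hp : 1 ≤ p) (x : ℕ → X) (hx : ∀ n, ‖x n‖ = 1)
    (hyp : ∀ ε : ℝ, 0 < ε → ε < 1 →
      ∀ (s : Finset ℕ) (F : Submodule ℝ X), F ≤ Submodule.span ℝ (x '' ↑s) →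
        ∃ n : ℕ, ∀ y ∈ F, ‖y‖ = 1 → ∀ lam : ℝ,
          (1 - ε) * (‖y‖ ^ p + |lam| ^ p) ^ (1 / p) ≤ ‖y + lam • x n‖ ∧
          ‖y + lam • x n‖ ≤ (1 + ε) * (‖y‖ ^ p + |lam| ^ p) ^ (1 / p)) :
    ∀ ε : ℝ, 0 < ε → ∃ φ : ℕ → ℕ, StrictMono φ ∧
      ∀ (lam : ℕ → ℝ) (l : ℕ),
        (1 - ε) * (∑ j ∈ range l, |lam j| ^ p) ^ (1 / p) ≤
          ‖∑ j ∈ range l, lam j • x (φ j)‖ ∧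
        ‖∑ j ∈ range l, lam j • x (φ j)‖ ≤
          (1 + ε) * (∑ j ∈ range l, |lam j| ^ p) ^ (1 / p) := by
  intro ε hε
  have hp0 : p ≠ 0 := by positivity
  set ε₀ : ℝ := min ε 1 with hε₀def
  have hε₀0 : 0 < ε₀ := lt_min hε one_pos
  have hε₀1 : ε₀ ≤ 1 := min_le_right _ _
  have hε₀ε : ε₀ ≤ ε := min_le_left _ _
  set θ : ℕ → ℝ := fun j => ε₀ / 2 ^ (j + 2) with hθdef
  have hθ0 : ∀ j, 0 < θ j := fun j => by positivity
  have hθ1 : ∀ j, θ j < 1 := by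
    intro j
    have h4 : (4:ℝ) ≤ 2 ^ (j + 2) := by
      calc (4:ℝ) = 2 ^ 2 := by norm_num
        _ ≤ 2 ^ (j + 2) := by apply pow_le_pow_right₀ one_le_two; omega
    rw [hθdef]
    simp only
    rw [div_lt_one (by positivity)]
    linarith
  choose f hf1 hf2 using fun (m l : ℕ) =>
    key_aux p hp x hx hyp (θ l) (hθ0 l) (hθ1 l) m
  set φ : ℕ → ℕ := fun l => Nat.rec 0 (fun k prev => f prev (k + 1)) l with hφdef
  have hφs : ∀ l, φ (l + 1) = f (φ l) (l + 1) := fun l => rfl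
  have hmono : StrictMono φ :=
    strictMono_nat_of_lt_succ fun l => by rw [hφs]; exact hf1 _ _
  -- product bounds
  have hu0 : ∀ l, (0:ℝ) ≤ ∏ j ∈ range l, (1 - θ j) :=
    fun l => prod_nonneg fun j _ => by have := hθ1 j; linarith
  have hu1 : ∀ l, (∏ j ∈ range l, (1 - θ j)) ≤ 1 :=
    fun l => prod_le_one (fun j _ => by have := hθ1 j; linarith)
      (fun j _ => by have := hθ0 j; linarith)
  have hU1 : ∀ l, (1:ℝ) ≤ ∏ j ∈ range l, (1 + θ j) := by
    intro l
    calc (1:ℝ) = ∏ _j ∈ range l, (1:ℝ) := by simp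
      _ ≤ ∏ j ∈ range l, (1 + θ j) := by
          apply prod_le_prod
          · intro j _; norm_num
          · intro j _; have := hθ0 j; linarith
  have hulow : ∀ l, 1 - ε₀ ≤ ∏ j ∈ range l, (1 - θ j) :=
    fun l => prod_lower_bound ε₀ hε₀0 hε₀1 l
  have hUup : ∀ l, (∏ j ∈ range l, (1 + θ j)) ≤ 1 + ε₀ :=
    fun l => prod_upper_bound ε₀ hε₀0 hε₀1 l
  -- main invariant
  have main : ∀ (lam : ℕ → ℝ) (l : ℕ),
      (∏ j ∈ range l, (1 - θ j)) * (∑ j ∈ range l, |lam j| ^ p) ^ (1/p) ≤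
        ‖∑ j ∈ range l, lam j • x (φ j)‖ ∧
      ‖∑ j ∈ range l, lam j • x (φ j)‖ ≤
        (∏ j ∈ range l, (1 + θ j)) * (∑ j ∈ range l, |lam j| ^ p) ^ (1/p) := by
    intro lam l
    induction l with
    | zero =>
      simp [Real.zero_rpow (one_div_ne_zero hp0), Real.zero_rpow (inv_ne_zero hp0)]
    | succ l ih =>
      have hA : (|lam l| ^ p) ^ (1/p) = |lam l| := by
        rw [one_div, Real.rpow_rpow_inv (abs_nonneg _) hp0]
      cases l with
      | zero =>
        simp only [sum_range_one, prod_range_one, zero_add]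
        rw [norm_smul, hx (φ 0), mul_one, Real.norm_eq_abs, hA]
        have h1 := hθ0 0
        have h2 := hθ1 0
        constructor
        · nlinarith [abs_nonneg (lam 0)]
        · nlinarith [abs_nonneg (lam 0)]
      | succ k =>
        set S := ∑ j ∈ range (k + 1), lam j • x (φ j) with hSdef
        set B := ∑ j ∈ range (k + 1), |lam j| ^ p with hBdef
        have hB0 : 0 ≤ B := sum_nonneg fun j _ => Real.rpow_nonneg (abs_nonneg _) _
        have hSmem : S ∈ Submodule.span ℝ (x '' ↑(range (φ k + 1))) := by
          apply Submodule.sum_mem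
          intro j hj
          apply Submodule.smul_mem
          apply Submodule.subset_span
          refine ⟨φ j, ?_, rfl⟩
          simp only [coe_range, Set.mem_Iio]
          have : j ≤ k := Nat.lt_succ_iff.mp (mem_range.mp hj)
          exact Nat.lt_succ_of_le (hmono.monotone this)
        have hkey := hf2 (φ k) (k + 1) S hSmem (lam (k + 1))
        rw [← hφs k] at hkey
        obtain ⟨hlow, hup⟩ := hkey
        rw [sum_range_succ (fun j => lam j • x (φ j)) (k + 1),
          sum_range_succ (fun j => |lam j| ^ p) (k + 1),
          prod_range_succ (fun j => (1 - θ j)) (k + 1),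
          prod_range_succ (fun j => (1 + θ j)) (k + 1), ← hSdef, ← hBdef]
        have hb0 : 0 ≤ |lam (k + 1)| ^ p := Real.rpow_nonneg (abs_nonneg _) _
        have hθk0 := hθ0 (k + 1)
        have hθk1 := hθ1 (k + 1)
        constructor
        · have h1 : (∏ j ∈ range (k + 1), (1 - θ j)) * (B + |lam (k + 1)| ^ p) ^ (1/p)
              ≤ (‖S‖ ^ p + |lam (k + 1)| ^ p) ^ (1/p) :=
            rpow_combine_lower p hp (hu0 _) (hu1 _) hB0 hb0 (norm_nonneg S) ih.1
          calc (∏ j ∈ range (k + 1), (1 - θ j)) * (1 - θ (k + 1)) *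
                (B + |lam (k + 1)| ^ p) ^ (1/p)
              = (1 - θ (k + 1)) * ((∏ j ∈ range (k + 1), (1 - θ j)) *
                (B + |lam (k + 1)| ^ p) ^ (1/p)) := by ring
            _ ≤ (1 - θ (k + 1)) * (‖S‖ ^ p + |lam (k + 1)| ^ p) ^ (1/p) :=
                mul_le_mul_of_nonneg_left h1 (by linarith)
            _ ≤ ‖S + lam (k + 1) • x (φ (k + 1))‖ := hlow
        · have h1 : (‖S‖ ^ p + |lam (k + 1)| ^ p) ^ (1/p)
              ≤ (∏ j ∈ range (k + 1), (1 + θ j)) * (B + |lam (k + 1)| ^ p) ^ (1/p) :=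
            rpow_combine_upper p hp (hU1 _) hB0 hb0 (norm_nonneg S) ih.2
          calc ‖S + lam (k + 1) • x (φ (k + 1))‖
              ≤ (1 + θ (k + 1)) * (‖S‖ ^ p + |lam (k + 1)| ^ p) ^ (1/p) := hup
            _ ≤ (1 + θ (k + 1)) * ((∏ j ∈ range (k + 1), (1 + θ j)) *
                (B + |lam (k + 1)| ^ p) ^ (1/p)) :=
                mul_le_mul_of_nonneg_left h1 (by linarith)
            _ = (∏ j ∈ range (k + 1), (1 + θ j)) * (1 + θ (k + 1)) *
                (B + |lam (k + 1)| ^ p) ^ (1/p) := by ring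
  refine ⟨φ, hmono, ?_⟩
  intro lam l
  obtain ⟨h1, h2⟩ := main lam l
  have hA0 : 0 ≤ (∑ j ∈ range l, |lam j| ^ p) ^ (1/p) :=
    Real.rpow_nonneg (sum_nonneg fun j _ => Real.rpow_nonneg (abs_nonneg _) _) _
  constructor
  · calc (1 - ε) * (∑ j ∈ range l, |lam j| ^ p) ^ (1/p)
        ≤ (∏ j ∈ range l, (1 - θ j)) * (∑ j ∈ range l, |lam j| ^ p) ^ (1/p) := by
          apply mul_le_mul_of_nonneg_right _ hA0
          have := hulow l; linarith
      _ ≤ ‖∑ j ∈ range l, lam j • x (φ j)‖ := h1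
  · calc ‖∑ j ∈ range l, lam j • x (φ j)‖
        ≤ (∏ j ∈ range l, (1 + θ j)) * (∑ j ∈ range l, |lam j| ^ p) ^ (1/p) := h2
      _ ≤ (1 + ε) * (∑ j ∈ range l, |lam j| ^ p) ^ (1/p) := by
          apply mul_le_mul_of_nonneg_right _ hA0
          have := hUup l; linarith
end
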